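/- Finite chamber decomposition of the quantile problem: Fix α ∈ (0,1). Then sup_{W ∈ W̄} Q_{n,α}(W) = max over admissible chambers Γ of sup_{W ∈ cl(F_Γ)} W^{k_{α,Γ}}, where k_{α,Γ} is the quantile count vector of the chamber Γ. -/

import Mathlib

set_option maxHeartbeats 1000000

open Finset Filter Topology
open scoped Classical

noncomputable section

/-- The closed Arrow–Debreu wealth simplex `{W ∈ [0,∞)^m : Σ q_i W_i = 1}`. -/
def closedSimplex {m : ℕ} (q : Fin m → ℝ) : Set (Fin m → ℝ) :=
  {W | (∀ i, 0 ≤ W i) ∧ ∑ i, q i * W i = 1}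

/-- The open Arrow–Debreu wealth simplex `{W ∈ (0,∞)^m : Σ q_i W_i = 1}`. -/
def openSimplex {m : ℕ} (q : Fin m → ℝ) : Set (Fin m → ℝ) :=
  {W | (∀ i, 0 < W i) ∧ ∑ i, q i * W i = 1}

/-- The finite set `C_n` of count vectors `k : Fin m → ℕ` with `Σ k_i = n`. -/
def countFinset (m n : ℕ) : Finset (Fin m → ℕ) :=
  (Fintype.piFinset fun _ : Fin m => Finset.range (n + 1)).filter fun k => ∑ i, k i = n

/-- The monomial `W^k := Π_i W_i^{k_i}` (with the convention `0^0 = 1`). -/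
def mono {m : ℕ} (W : Fin m → ℝ) (k : Fin m → ℕ) : ℝ := ∏ i, W i ^ k i

/-- The multinomial probability `π_k = (n!/(k_1!⋯k_m!))·Π p_i^{k_i}`. -/
def countProb {m : ℕ} (p : Fin m → ℝ) (k : Fin m → ℕ) : ℝ :=
  (Nat.multinomial Finset.univ k : ℝ) * ∏ i, p i ^ k i

/-- The upper α-quantile of terminal wealth
`Q_{n,α}(W) := sup{t ∈ [0,∞) : Σ_{k ∈ C_n : W^k ≥ t} π_k ≥ α}`. -/
def upperQuantile {m : ℕ} (p : Fin m → ℝ) (n : ℕ) (α : ℝ) (W : Fin m → ℝ) : ℝ :=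
  sSup {t : ℝ | 0 ≤ t ∧
    α ≤ ∑ k ∈ countFinset m n, if t ≤ mono W k then countProb p k else 0}

/-- The union of the count hyperplanes `H_{k,ℓ}`. -/
def hyperUnion (m n : ℕ) : Set (Fin m → ℝ) :=
  {u | ∃ k ∈ countFinset m n, ∃ l ∈ countFinset m n,
    k ≠ l ∧ ∑ i, ((k i : ℝ) - (l i : ℝ)) * u i = 0}

/-- A chamber is a connected component of the complement of the count arrangement. -/
def IsChamber (m n : ℕ) (Γ : Set (Fin m → ℝ)) : Prop :=
  ∃ u ∈ (hyperUnion m n)ᶜ, Γ = connectedComponentIn (hyperUnion m n)ᶜ u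

/-- `F_Γ := {W ∈ W⁺⁺ : log W ∈ Γ}`. -/
def chamberFace {m : ℕ} (q : Fin m → ℝ) (Γ : Set (Fin m → ℝ)) : Set (Fin m → ℝ) :=
  {W | W ∈ openSimplex q ∧ (fun i => Real.log (W i)) ∈ Γ}

/-- `k` is the quantile count vector `k_{α,Γ}` of the chamber `Γ`: the tail mass at `W^k`
is at least `α`, while the strict tail mass is below `α`, for every `W ∈ F_Γ`. -/
def IsQuantileVec {m : ℕ} (p q : Fin m → ℝ) (n : ℕ) (α : ℝ) (Γ : Set (Fin m → ℝ))
    (k : Fin m → ℕ) : Prop :=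
  k ∈ countFinset m n ∧
  ∀ W ∈ chamberFace q Γ,
    α ≤ (∑ l ∈ countFinset m n, if mono W k ≤ mono W l then countProb p l else 0) ∧
    (∑ l ∈ countFinset m n, if mono W k < mono W l then countProb p l else 0) < α

/-! ### Auxiliary lemmas -/

section Aux

lemma mem_countFinset {m n : ℕ} {k : Fin m → ℕ} :
    k ∈ countFinset m n ↔ ∑ i, k i = n := by
  constructor
  · intro h; exact (Finset.mem_filter.1 h).2
  · intro h
    refine Finset.mem_filter.2 ⟨Fintype.mem_piFinset.2 fun i => ?_, h⟩
    rw [Finset.mem_range, Nat.lt_succ_iff, ← h]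
    exact Finset.single_le_sum (fun _ _ => Nat.zero_le _) (Finset.mem_univ i)

lemma countFinset_eq_piAntidiag (m n : ℕ) :
    countFinset m n = Finset.piAntidiag Finset.univ n := by
  ext k
  rw [mem_countFinset, Finset.mem_piAntidiag]
  simp

lemma sum_countProb {m n : ℕ} (p : Fin m → ℝ) (hpsum : ∑ i, p i = 1) :
    ∑ k ∈ countFinset m n, countProb p k = 1 := by
  rw [countFinset_eq_piAntidiag]
  have := (Finset.sum_pow_eq_sum_piAntidiag (Finset.univ : Finset (Fin m)) p n).symm
  unfold countProb
  rw [this, hpsum, one_pow]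

lemma countProb_nonneg {m : ℕ} {p : Fin m → ℝ} (hp : ∀ i, 0 < p i) (k : Fin m → ℕ) :
    0 ≤ countProb p k := by
  unfold countProb
  apply mul_nonneg (Nat.cast_nonneg _)
  exact Finset.prod_nonneg fun i _ => pow_nonneg (hp i).le _

lemma countFinset_nonempty {m n : ℕ} (hm : 0 < m) : (countFinset m n).Nonempty := by
  refine ⟨fun i => if i = ⟨0, hm⟩ then n else 0, mem_countFinset.2 ?_⟩
  simp

lemma isClosed_closedSimplex {m : ℕ} (q : Fin m → ℝ) : IsClosed (closedSimplex q) := by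
  have h1 : closedSimplex q =
      (⋂ i, {W : Fin m → ℝ | 0 ≤ W i}) ∩ {W : Fin m → ℝ | ∑ i, q i * W i = 1} := by
    ext W; simp [closedSimplex, Set.mem_iInter]
  rw [h1]
  refine IsClosed.inter (isClosed_iInter fun i => ?_) ?_
  · exact isClosed_le continuous_const (continuous_apply i)
  · exact isClosed_eq (by continuity) continuous_const

lemma mono_nonneg {m : ℕ} {W : Fin m → ℝ} (hW : ∀ i, 0 ≤ W i) (k : Fin m → ℕ) :
    0 ≤ mono W k :=
  Finset.prod_nonneg fun i _ => pow_nonneg (hW i) _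

lemma continuous_mono {m : ℕ} (k : Fin m → ℕ) : Continuous fun W : Fin m → ℝ => mono W k :=
  continuous_finset_prod _ fun i _ => (continuous_apply i).pow _

lemma coord_le {m : ℕ} {q W : Fin m → ℝ} (hq : ∀ i, 0 < q i)
    (hW : W ∈ closedSimplex q) (i : Fin m) : W i ≤ 1 + ∑ j, (q j)⁻¹ := by
  obtain ⟨hW0, hWs⟩ := hW
  have h1 : q i * W i ≤ 1 := by
    rw [← hWs]
    exact Finset.single_le_sum (fun j _ => mul_nonneg (hq j).le (hW0 j)) (Finset.mem_univ i)
  have h2 : W i ≤ (q i)⁻¹ := by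
    have h3 := mul_le_mul_of_nonneg_left h1 (inv_nonneg.2 (hq i).le)
    rwa [← mul_assoc, inv_mul_cancel₀ (hq i).ne', one_mul, mul_one] at h3
  calc W i ≤ (q i)⁻¹ := h2
    _ ≤ ∑ j, (q j)⁻¹ :=
        Finset.single_le_sum (fun j _ => (inv_nonneg.2 (hq j).le)) (Finset.mem_univ i)
    _ ≤ 1 + ∑ j, (q j)⁻¹ := by linarith

lemma mono_le_bound {m n : ℕ} {q W : Fin m → ℝ} (hq : ∀ i, 0 < q i)
    (hW : W ∈ closedSimplex q) {k : Fin m → ℕ} (hk : k ∈ countFinset m n) :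
    mono W k ≤ (1 + ∑ j, (q j)⁻¹) ^ n := by
  have hM : (0:ℝ) ≤ 1 + ∑ j, (q j)⁻¹ := by
    have : (0:ℝ) ≤ ∑ j, (q j)⁻¹ :=
      Finset.sum_nonneg fun j _ => inv_nonneg.2 (hq j).le
    linarith
  calc mono W k ≤ ∏ i, (1 + ∑ j, (q j)⁻¹) ^ k i := by
        refine Finset.prod_le_prod (fun i _ => pow_nonneg (hW.1 i) _) fun i _ => ?_
        exact pow_le_pow_left₀ (hW.1 i) (coord_le hq hW i) _
    _ = (1 + ∑ j, (q j)⁻¹) ^ ∑ i, k i := by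
        rw [← Finset.prod_pow_eq_pow_sum]
    _ = _ := by rw [mem_countFinset.1 hk]

lemma sign_const {X : Type*} [TopologicalSpace X] {s : Set X} (hs : IsPreconnected s)
    {g : X → ℝ} (hg : ContinuousOn g s) (h0 : ∀ x ∈ s, g x ≠ 0)
    {x y : X} (hx : x ∈ s) (hy : y ∈ s) : (0 < g x ↔ 0 < g y) := by
  have key : ∀ a ∈ s, ∀ b ∈ s, 0 < g a → 0 < g b := by
    intro a ha b hb hga
    by_contra hgb
    have hgb' : g b < 0 := lt_of_le_of_ne (not_lt.1 hgb) (h0 b hb)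
    have : (0:ℝ) ∈ Set.Icc (g b) (g a) := ⟨hgb'.le, hga.le⟩
    obtain ⟨z, hz, hz0⟩ := hs.intermediate_value hb ha hg this
    exact h0 z hz hz0
  exact ⟨key x hx y hy, key y hy x hx⟩

lemma mono_eq_exp {m : ℕ} {W : Fin m → ℝ} (hW : ∀ i, 0 < W i) (k : Fin m → ℕ) :
    mono W k = Real.exp (∑ i, (k i : ℝ) * Real.log (W i)) := by
  rw [Real.exp_sum]
  refine Finset.prod_congr rfl fun i _ => ?_
  rw [mul_comm, Real.exp_mul, Real.exp_log (hW i), Real.rpow_natCast]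

lemma mono_le_iff {m : ℕ} {W : Fin m → ℝ} (hW : ∀ i, 0 < W i) (k l : Fin m → ℕ) :
    (mono W k ≤ mono W l ↔ 0 ≤ ∑ i, ((l i : ℝ) - (k i : ℝ)) * Real.log (W i)) := by
  rw [mono_eq_exp hW, mono_eq_exp hW, Real.exp_le_exp, ← sub_nonneg, ← Finset.sum_sub_distrib]
  constructor <;> intro h <;>
  · convert h using 2 with i
    ring

lemma mono_lt_iff {m : ℕ} {W : Fin m → ℝ} (hW : ∀ i, 0 < W i) (k l : Fin m → ℕ) :
    (mono W k < mono W l ↔ 0 < ∑ i, ((l i : ℝ) - (k i : ℝ)) * Real.log (W i)) := by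
  rw [mono_eq_exp hW, mono_eq_exp hW, Real.exp_lt_exp, ← sub_pos, ← Finset.sum_sub_distrib]
  constructor <;> intro h <;>
  · convert h using 2 with i
    ring

lemma ker_measure_zero {m : ℕ} (c : Fin m → ℝ) (hc : ∃ i, c i ≠ 0) :
    MeasureTheory.volume {v : Fin m → ℝ | ∑ i, c i * v i = 0} = 0 := by
  classical
  set L : (Fin m → ℝ) →ₗ[ℝ] ℝ :=
    ∑ i, c i • (LinearMap.proj i : (Fin m → ℝ) →ₗ[ℝ] ℝ) with hL
  have hLv : ∀ v, L v = ∑ i, c i * v i := by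
    intro v
    rw [hL, LinearMap.sum_apply]
    simp [smul_eq_mul]
  have hset : {v : Fin m → ℝ | ∑ i, c i * v i = 0} = (LinearMap.ker L : Set (Fin m → ℝ)) := by
    ext v; simp [LinearMap.mem_ker, hLv]
  rw [hset]
  apply MeasureTheory.Measure.addHaar_submodule
  intro htop
  obtain ⟨i0, hi0⟩ := hc
  have h1 : L (Pi.single i0 1) = 0 := by
    rw [← LinearMap.mem_ker, htop]; trivial
  rw [hLv] at h1
  simp [Pi.single_apply] at h1
  exact hi0 h1

lemma exists_generic (m n : ℕ) :
    ∃ v : Fin m → ℝ, ∀ k ∈ countFinset m n, ∀ l ∈ countFinset m n, k ≠ l →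
      (∑ i, ((k i : ℝ) - l i) * v i) ≠ 0 := by
  classical
  set Bad : Set (Fin m → ℝ) :=
    ⋃ d ∈ ((countFinset m n ×ˢ countFinset m n).filter fun d => d.1 ≠ d.2),
      {v : Fin m → ℝ | ∑ i, ((d.1 i : ℝ) - d.2 i) * v i = 0} with hBad
  have hzero : MeasureTheory.volume Bad = 0 := by
    refine MeasureTheory.measure_biUnion_null_iff (Finset.countable_toSet _) |>.2 fun d hd => ?_
    have hne : d.1 ≠ d.2 := (Finset.mem_filter.1 hd).2
    obtain ⟨i0, hi0⟩ : ∃ i, d.1 i ≠ d.2 i := Function.ne_iff.1 hne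
    refine ker_measure_zero _ ⟨i0, ?_⟩
    intro h
    exact hi0 (Nat.cast_injective (by linarith : (d.1 i0 : ℝ) = d.2 i0))
  obtain ⟨v, hv⟩ : ∃ v, v ∉ Bad := by
    by_contra h
    push_neg at h
    have huniv : Bad = Set.univ := Set.eq_univ_of_forall h
    rw [huniv] at hzero
    have hpos : 0 < MeasureTheory.volume (Set.univ : Set (Fin m → ℝ)) :=
      (isOpen_univ).measure_pos MeasureTheory.volume Set.univ_nonempty
    rw [hzero] at hpos
    exact lt_irrefl _ hpos
  refine ⟨v, fun k hk l hl hkl => fun h0 => hv ?_⟩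
  have hmem : (k, l) ∈ (countFinset m n ×ˢ countFinset m n).filter fun d => d.1 ≠ d.2 :=
    Finset.mem_filter.2 ⟨Finset.mem_product.2 ⟨hk, hl⟩, hkl⟩
  exact Set.mem_biUnion (Finset.mem_coe.2 hmem) h0

lemma exists_chamber_approx (m n : ℕ) (hm : 0 < m) (q : Fin m → ℝ) (hq : ∀ i, 0 < q i)
    {W : Fin m → ℝ} (hW : W ∈ closedSimplex q) :
    ∃ Γ : Set (Fin m → ℝ), ∃ Φ : ℝ → Fin m → ℝ,
      IsChamber m n Γ ∧
      (∀ᶠ ε in 𝓝[>] (0:ℝ), Φ ε ∈ chamberFace q Γ) ∧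
      Tendsto Φ (𝓝[>] (0:ℝ)) (𝓝 W) := by
  classical
  have : Nonempty (Fin m) := ⟨⟨0, hm⟩⟩
  obtain ⟨v, hv⟩ := exists_generic m n
  set u : ℝ → Fin m → ℝ :=
    fun ε i => (if W i = 0 then -1/ε else Real.log (W i)) + ε * v i with hu
  set Wt : ℝ → Fin m → ℝ := fun ε i => Real.exp (u ε i) with hWtdef
  set st : ℝ → ℝ := fun ε => ∑ i, q i * Wt ε i with hstdef
  set Φ : ℝ → Fin m → ℝ := fun ε i => Wt ε i / st ε with hΦdef
  have hstpos : ∀ ε, 0 < st ε := fun ε =>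
    Finset.sum_pos (fun i _ => mul_pos (hq i) (Real.exp_pos _)) Finset.univ_nonempty
  have hΦpos : ∀ ε i, 0 < Φ ε i := fun ε i => div_pos (Real.exp_pos _) (hstpos ε)
  have hΦopen : ∀ ε, Φ ε ∈ openSimplex q := by
    intro ε
    refine ⟨hΦpos ε, ?_⟩
    have : ∑ i, q i * (Wt ε i / st ε) = (∑ i, q i * Wt ε i) / st ε := by
      rw [Finset.sum_div]
      exact Finset.sum_congr rfl fun i _ => (mul_div_assoc _ _ _).symm
    rw [hΦdef]
    show ∑ i, q i * (Wt ε i / st ε) = 1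
    rw [this]; exact div_self (hstpos ε).ne'
  have hlogΦ : ∀ ε i, Real.log (Φ ε i) = u ε i - Real.log (st ε) := by
    intro ε i
    rw [hΦdef]
    simp only
    rw [Real.log_div (Real.exp_ne_zero _) (hstpos ε).ne', Real.log_exp]
  -- the linear functionals along the path
  have hsum_d : ∀ k ∈ countFinset m n, ∀ l ∈ countFinset m n,
      (∑ i, ((k i : ℝ) - l i)) = 0 := by
    intro k hk l hl
    rw [Finset.sum_sub_distrib]
    have hk' := mem_countFinset.1 hk
    have hl' := mem_countFinset.1 hl
    have : ((∑ i, k i : ℕ) : ℝ) = ((∑ i, l i : ℕ) : ℝ) := by rw [hk', hl']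
    push_cast at this
    linarith
  have hkey : ∀ k ∈ countFinset m n, ∀ l ∈ countFinset m n, ∀ ε : ℝ, ε ≠ 0 →
      (∑ i, ((k i : ℝ) - l i) * Real.log (Φ ε i)) =
      (1/ε) * (-(∑ i, if W i = 0 then ((k i : ℝ) - l i) else 0)
        + ε * (∑ i, if W i = 0 then 0 else ((k i : ℝ) - l i) * Real.log (W i))
        + ε^2 * (∑ i, ((k i : ℝ) - l i) * v i)) := by
    intro k hk l hl ε hε
    have h1 : (∑ i, ((k i : ℝ) - l i) * Real.log (Φ ε i)) =
        (∑ i, ((k i : ℝ) - l i) * u ε i)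
          - (∑ i, ((k i : ℝ) - l i)) * Real.log (st ε) := by
      rw [Finset.sum_mul, ← Finset.sum_sub_distrib]
      refine Finset.sum_congr rfl fun i _ => ?_
      rw [hlogΦ]
      ring
    rw [h1, hsum_d k hk l hl, zero_mul, sub_zero]
    have h2 : ∀ i, ((k i : ℝ) - l i) * u ε i =
        (if W i = 0 then ((k i : ℝ) - l i) else 0) * (-1/ε)
        + (if W i = 0 then 0 else ((k i : ℝ) - l i) * Real.log (W i))
        + ε * (((k i : ℝ) - l i) * v i) := by
      intro i
      by_cases h : W i = 0 <;> simp [hu, h] <;> ring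
    rw [Finset.sum_congr rfl fun i _ => h2 i]
    rw [Finset.sum_add_distrib, Finset.sum_add_distrib, ← Finset.sum_mul, ← Finset.mul_sum]
    field_simp
  -- eventual nonvanishing
  set D := (countFinset m n ×ˢ countFinset m n).filter (fun d => d.1 ≠ d.2) with hD
  have hev : ∀ᶠ ε in 𝓝[>] (0:ℝ), ∀ d ∈ D,
      (-(∑ i, if W i = 0 then ((d.1 i : ℝ) - d.2 i) else 0)
        + ε * (∑ i, if W i = 0 then 0 else ((d.1 i : ℝ) - d.2 i) * Real.log (W i))
        + ε^2 * (∑ i, ((d.1 i : ℝ) - d.2 i) * v i)) ≠ 0 := by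
    rw [eventually_all_finset]
    intro d hd
    have hd1 : d.1 ∈ countFinset m n := (Finset.mem_product.1 (Finset.mem_filter.1 hd).1).1
    have hd2 : d.2 ∈ countFinset m n := (Finset.mem_product.1 (Finset.mem_filter.1 hd).1).2
    have hdne : d.1 ≠ d.2 := (Finset.mem_filter.1 hd).2
    set A := ∑ i, if W i = 0 then ((d.1 i : ℝ) - d.2 i) else 0 with hA
    set B := ∑ i, if W i = 0 then 0 else ((d.1 i : ℝ) - d.2 i) * Real.log (W i) with hB
    set C := ∑ i, ((d.1 i : ℝ) - d.2 i) * v i with hC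
    have hCne : C ≠ 0 := hv d.1 hd1 d.2 hd2 hdne
    by_cases hA0 : A = 0
    · by_cases hB0 : B = 0
      · filter_upwards [self_mem_nhdsWithin] with ε hε
        have hεpos : (0:ℝ) < ε := hε
        rw [hA0, hB0]
        simp only [neg_zero, zero_add, mul_zero]
        exact fun h => hCne (by
          have := mul_ne_zero (pow_ne_zero 2 hεpos.ne') hCne
          exact absurd h this)
      · have hcont : ContinuousAt (fun ε : ℝ => B + ε * C) 0 := by fun_prop
        have hne : (fun ε : ℝ => B + ε * C) 0 ≠ 0 := by simpa using hB0
        have := hcont.eventually_ne hne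
        have h2 := eventually_nhdsWithin_of_eventually_nhds (α := ℝ)
          (s := Set.Ioi (0:ℝ)) this
        filter_upwards [h2, self_mem_nhdsWithin] with ε h1 hε
        have hεpos : (0:ℝ) < ε := hε
        have : -A + ε * B + ε^2 * C = ε * (B + ε * C) := by rw [hA0]; ring
        rw [this]
        exact mul_ne_zero hεpos.ne' h1
    · have hcont : ContinuousAt (fun ε : ℝ => -A + ε * B + ε^2 * C) 0 := by fun_prop
      have hne : (fun ε : ℝ => -A + ε * B + ε^2 * C) 0 ≠ 0 := by simpa using hA0
      exact eventually_nhdsWithin_of_eventually_nhds (hcont.eventually_ne hne)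
  have hevc : ∀ᶠ ε in 𝓝[>] (0:ℝ), (fun i => Real.log (Φ ε i)) ∈ (hyperUnion m n)ᶜ := by
    filter_upwards [hev, self_mem_nhdsWithin] with ε h1 hε
    intro hmem
    obtain ⟨k, hk, l, hl, hkl, hzero⟩ := hmem
    have hεpos : (0:ℝ) < ε := hε
    have hd : (k, l) ∈ D := Finset.mem_filter.2 ⟨Finset.mem_product.2 ⟨hk, hl⟩, hkl⟩
    have := h1 (k, l) hd
    rw [hkey k hk l hl ε hεpos.ne'] at hzero
    exact this (by
      rcases mul_eq_zero.1 hzero with h | h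
      · exact absurd h (by positivity)
      · exact h)
  -- extract ε₀
  obtain ⟨ε₀, hε₀, hIoc⟩ := mem_nhdsGT_iff_exists_Ioc_subset.1 hevc
  have hε₀pos : (0:ℝ) < ε₀ := hε₀
  set Γ := connectedComponentIn (hyperUnion m n)ᶜ (fun i => Real.log (Φ ε₀ i)) with hΓ
  have hε₀mem : ε₀ ∈ Set.Ioc (0:ℝ) ε₀ := ⟨hε₀pos, le_refl _⟩
  have hchamber : IsChamber m n Γ := ⟨_, hIoc hε₀mem, rfl⟩
  -- continuity of the log-path on Ioi 0
  have hcontlog : ContinuousOn (fun ε => (fun i => Real.log (Φ ε i))) (Set.Ioi (0:ℝ)) := by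
    rw [continuousOn_pi]
    intro i
    have hucont : ContinuousOn (fun ε => u ε i) (Set.Ioi (0:ℝ)) := by
      by_cases h : W i = 0
      · simp only [hu, h, if_true]
        apply ContinuousOn.add
        · exact ContinuousOn.div continuousOn_const continuousOn_id
            (fun x hx => (ne_of_gt hx))
        · exact (continuousOn_id.mul continuousOn_const)
      · simp only [hu, h, if_false]
        exact ContinuousOn.add continuousOn_const (continuousOn_id.mul continuousOn_const)
    have hWtcont : ∀ j, ContinuousOn (fun ε => Wt ε j) (Set.Ioi (0:ℝ)) := by
      intro j
      have hucontj : ContinuousOn (fun ε => u ε j) (Set.Ioi (0:ℝ)) := by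
        by_cases h : W j = 0
        · simp only [hu, h, if_true]
          apply ContinuousOn.add
          · exact ContinuousOn.div continuousOn_const continuousOn_id
              (fun x hx => (ne_of_gt hx))
          · exact (continuousOn_id.mul continuousOn_const)
        · simp only [hu, h, if_false]
          exact ContinuousOn.add continuousOn_const (continuousOn_id.mul continuousOn_const)
      exact Real.continuous_exp.comp_continuousOn hucontj
    have hstcont : ContinuousOn st (Set.Ioi (0:ℝ)) := by
      apply continuousOn_finset_sum
      intro j _
      exact continuousOn_const.mul (hWtcont j)
    have hΦcont : ContinuousOn (fun ε => Φ ε i) (Set.Ioi (0:ℝ)) :=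
      (hWtcont i).div hstcont (fun x _ => (hstpos x).ne')
    exact hΦcont.log (fun x _ => (hΦpos x i).ne')
  -- each point of the path for ε ∈ Ioc 0 ε₀ is in the chamber face
  have hface : ∀ ε ∈ Set.Ioc (0:ℝ) ε₀, Φ ε ∈ chamberFace q Γ := by
    intro ε hε
    refine ⟨hΦopen ε, ?_⟩
    have hIccsub : Set.Icc ε ε₀ ⊆ Set.Ioc (0:ℝ) ε₀ := by
      intro x hx
      exact ⟨lt_of_lt_of_le hε.1 hx.1, hx.2⟩
    have hS : IsPreconnected ((fun ε => (fun i => Real.log (Φ ε i))) '' Set.Icc ε ε₀) :=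
      (isPreconnected_Icc).image _ (hcontlog.mono (fun x hx => (hIccsub hx).1))
    have hSsub : ((fun ε => (fun i => Real.log (Φ ε i))) '' Set.Icc ε ε₀) ⊆
        (hyperUnion m n)ᶜ := by
      rintro _ ⟨x, hx, rfl⟩
      exact hIoc (hIccsub hx)
    have hmem₀ : (fun i => Real.log (Φ ε₀ i)) ∈
        ((fun ε => (fun i => Real.log (Φ ε i))) '' Set.Icc ε ε₀) :=
      Set.mem_image_of_mem _ ⟨hε.2, le_refl _⟩
    have := hS.subset_connectedComponentIn hmem₀ hSsub
    exact this (Set.mem_image_of_mem _ ⟨le_refl _, hε.2⟩)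
  refine ⟨Γ, Φ, hchamber, ?_, ?_⟩
  · filter_upwards [Ioc_mem_nhdsGT hε₀pos] with ε hε
    exact hface ε hε
  · -- convergence to W
    have hWtlim : ∀ i, Tendsto (fun ε => Wt ε i) (𝓝[>] (0:ℝ)) (𝓝 (W i)) := by
      intro i
      by_cases h : W i = 0
      · have h1 : Tendsto (fun ε : ℝ => Real.exp (-1/ε)) (𝓝[>] (0:ℝ)) (𝓝 0) := by
          apply Real.tendsto_exp_atBot.comp
          have h2 : Tendsto (fun ε : ℝ => -(ε⁻¹)) (𝓝[>] (0:ℝ)) atBot :=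
            tendsto_neg_atTop_atBot.comp tendsto_inv_nhdsGT_zero
          exact Tendsto.congr (fun x => by rw [neg_div, one_div]) h2
        have h2 : Tendsto (fun ε : ℝ => Real.exp (ε * v i)) (𝓝[>] (0:ℝ)) (𝓝 1) := by
          have : ContinuousAt (fun ε : ℝ => Real.exp (ε * v i)) 0 := by fun_prop
          have h3 := this.continuousWithinAt (s := Set.Ioi (0:ℝ))
          simpa using h3.tendsto
        have h3 : (fun ε => Wt ε i) = fun ε =>
            Real.exp (-1/ε) * Real.exp (ε * v i) := by
          funext ε
          rw [hWtdef]
          simp only [hu, h, if_true, ← Real.exp_add]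
        rw [h3, h]
        simpa using h1.mul h2
      · have hWipos : 0 < W i := lt_of_le_of_ne (hW.1 i) (Ne.symm h)
        have : ContinuousAt (fun ε : ℝ => Real.exp (Real.log (W i) + ε * v i)) 0 := by
          fun_prop
        have h3 := (this.continuousWithinAt (s := Set.Ioi (0:ℝ))).tendsto
        have h4 : (fun ε => Wt ε i) = fun ε => Real.exp (Real.log (W i) + ε * v i) := by
          funext ε
          rw [hWtdef]
          simp only [hu, h, if_false]
        rw [h4]
        simpa [Real.exp_log hWipos] using h3
    have hstlim : Tendsto st (𝓝[>] (0:ℝ)) (𝓝 1) := by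
      have h1 : Tendsto st (𝓝[>] (0:ℝ)) (𝓝 (∑ j, q j * W j)) := by
        apply tendsto_finset_sum
        intro j _
        exact tendsto_const_nhds.mul (hWtlim j)
      rwa [hW.2] at h1
    rw [tendsto_pi_nhds]
    intro i
    have := (hWtlim i).div hstlim one_ne_zero
    rw [div_one] at this
    exact this

lemma chamber_compare {m n : ℕ} {Γ : Set (Fin m → ℝ)} (hΓ : IsChamber m n Γ)
    {q : Fin m → ℝ} {W1 W2 : Fin m → ℝ}
    (h1 : W1 ∈ chamberFace q Γ) (h2 : W2 ∈ chamberFace q Γ)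
    {k l : Fin m → ℕ} (hk : k ∈ countFinset m n) (hl : l ∈ countFinset m n) :
    (mono W1 k ≤ mono W1 l ↔ mono W2 k ≤ mono W2 l) ∧
    (mono W1 k < mono W1 l ↔ mono W2 k < mono W2 l) := by
  by_cases hkl : k = l
  · subst hkl; simp
  · obtain ⟨u0, hu0, hΓeq⟩ := hΓ
    set g : (Fin m → ℝ) → ℝ := fun u => ∑ i, ((l i : ℝ) - k i) * u i with hg
    have hgcont : Continuous g :=
      continuous_finset_sum _ fun i _ => continuous_const.mul (continuous_apply i)
    have hΓsub : Γ ⊆ (hyperUnion m n)ᶜ := by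
      rw [hΓeq]; exact connectedComponentIn_subset _ _
    have hgne : ∀ x ∈ Γ, g x ≠ 0 := fun x hx h0 =>
      hΓsub hx ⟨l, hl, k, hk, Ne.symm hkl, h0⟩
    have hpre : IsPreconnected Γ := by
      rw [hΓeq]; exact isPreconnected_connectedComponentIn
    have hsign := sign_const hpre hgcont.continuousOn hgne h1.2 h2.2
    have e1 : g (fun i => Real.log (W1 i)) ≠ 0 := hgne _ h1.2
    have e2 : g (fun i => Real.log (W2 i)) ≠ 0 := hgne _ h2.2
    constructor
    · rw [mono_le_iff h1.1.1, mono_le_iff h2.1.1]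
      change 0 ≤ g (fun i => Real.log (W1 i)) ↔ 0 ≤ g (fun i => Real.log (W2 i))
      constructor
      · intro h; exact (hsign.1 (lt_of_le_of_ne h (Ne.symm e1))).le
      · intro h; exact (hsign.2 (lt_of_le_of_ne h (Ne.symm e2))).le
    · rw [mono_lt_iff h1.1.1, mono_lt_iff h2.1.1]
      exact hsign

lemma exists_isQuantileVec {m n : ℕ} (hm : 0 < m) (p q : Fin m → ℝ)
    (hp : ∀ i, 0 < p i) (hpsum : ∑ i, p i = 1) {α : ℝ} (hα : 0 < α ∧ α < 1)
    {Γ : Set (Fin m → ℝ)} (hΓ : IsChamber m n Γ)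
    {W0 : Fin m → ℝ} (hW0 : W0 ∈ chamberFace q Γ) :
    ∃ k : Fin m → ℕ, IsQuantileVec p q n α Γ k := by
  classical
  set C := countFinset m n with hC
  -- quantile at the base point W0
  set tail : (Fin m → ℕ) → ℝ :=
    fun k => ∑ l ∈ C, if mono W0 k ≤ mono W0 l then countProb p l else 0 with htail
  set A := C.filter fun k => α ≤ tail k with hA
  have hAne : A.Nonempty := by
    obtain ⟨k0, hk0, hk0min⟩ :=
      Finset.exists_min_image C (mono W0) (countFinset_nonempty hm)
    refine ⟨k0, Finset.mem_filter.2 ⟨hk0, ?_⟩⟩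
    have : tail k0 = ∑ l ∈ C, countProb p l := by
      refine Finset.sum_congr rfl fun l hl => ?_
      rw [if_pos (hk0min l hl)]
    rw [this, sum_countProb p hpsum]
    exact hα.2.le
  obtain ⟨k, hkA, hkmax⟩ := Finset.exists_max_image A (mono W0) hAne
  have hkC : k ∈ C := (Finset.mem_filter.1 hkA).1
  have hktail : α ≤ tail k := (Finset.mem_filter.1 hkA).2
  have hkstrict :
      (∑ l ∈ C, if mono W0 k < mono W0 l then countProb p l else 0) < α := by
    by_contra hcon
    push_neg at hcon
    set U := C.filter fun l => mono W0 k < mono W0 l with hU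
    rcases U.eq_empty_or_nonempty with hUe | hUne
    · have : (∑ l ∈ C, if mono W0 k < mono W0 l then countProb p l else 0) = 0 := by
        rw [← Finset.sum_filter, ← hU, hUe, Finset.sum_empty]
      rw [this] at hcon
      exact absurd hcon (not_le.2 hα.1)
    · obtain ⟨k', hk'U, hk'min⟩ := Finset.exists_min_image U (mono W0) hUne
      have hk'C : k' ∈ C := (Finset.mem_filter.1 hk'U).1
      have hk'gt : mono W0 k < mono W0 k' := (Finset.mem_filter.1 hk'U).2
      have heq : tail k' =
          ∑ l ∈ C, if mono W0 k < mono W0 l then countProb p l else 0 := by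
        refine Finset.sum_congr rfl fun l hl => ?_
        refine if_congr ?_ rfl rfl
        constructor
        · intro h; exact lt_of_lt_of_le hk'gt h
        · intro h; exact hk'min l (Finset.mem_filter.2 ⟨hl, h⟩)
      have hk'A : k' ∈ A := Finset.mem_filter.2 ⟨hk'C, by rw [heq]; exact hcon⟩
      exact absurd hk'gt (not_lt.2 (hkmax k' hk'A))
  -- transfer to the whole chamber
  refine ⟨k, hkC, fun W hW => ?_⟩
  constructor
  · have : (∑ l ∈ C, if mono W k ≤ mono W l then countProb p l else 0) = tail k := by
      refine Finset.sum_congr rfl fun l hl => ?_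
      exact if_congr (chamber_compare hΓ hW hW0 hkC hl).1 rfl rfl
    rw [this]; exact hktail
  · have : (∑ l ∈ C, if mono W k < mono W l then countProb p l else 0) =
        ∑ l ∈ C, if mono W0 k < mono W0 l then countProb p l else 0 := by
      refine Finset.sum_congr rfl fun l hl => ?_
      exact if_congr (chamber_compare hΓ hW hW0 hkC hl).2 rfl rfl
    rw [this]; exact hkstrict

end Aux

section Main

lemma zero_mem_qset {m n : ℕ} {p : Fin m → ℝ} (hp : ∀ i, 0 < p i)
    (hpsum : ∑ i, p i = 1) {α : ℝ} (hα : α < 1) {W : Fin m → ℝ} (hW0 : ∀ i, 0 ≤ W i) :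
    (0:ℝ) ∈ {t : ℝ | 0 ≤ t ∧
      α ≤ ∑ k ∈ countFinset m n, if t ≤ mono W k then countProb p k else 0} := by
  refine ⟨le_refl _, ?_⟩
  have h1 : (∑ k ∈ countFinset m n, if (0:ℝ) ≤ mono W k then countProb p k else 0)
      = ∑ k ∈ countFinset m n, countProb p k :=
    Finset.sum_congr rfl fun k _ => if_pos (mono_nonneg hW0 k)
  rw [h1, sum_countProb p hpsum]
  exact hα.le

lemma qset_le_bound {m n : ℕ} {p q : Fin m → ℝ} (hq : ∀ i, 0 < q i) {α : ℝ}
    (hα : 0 < α) {W : Fin m → ℝ} (hW : W ∈ closedSimplex q) :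
    ∀ t ∈ {t : ℝ | 0 ≤ t ∧
      α ≤ ∑ k ∈ countFinset m n, if t ≤ mono W k then countProb p k else 0},
      t ≤ (1 + ∑ j, (q j)⁻¹) ^ n := by
  rintro t ⟨ht0, htα⟩
  by_contra hgt
  push_neg at hgt
  have h1 : (∑ k ∈ countFinset m n, if t ≤ mono W k then countProb p k else 0) = 0 := by
    refine Finset.sum_eq_zero fun k hk => ?_
    rw [if_neg]
    intro hle
    exact absurd (le_trans hle (mono_le_bound hq hW hk)) (not_le.2 hgt)
  rw [h1] at htα
  exact absurd htα (not_le.2 hα)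

lemma main_exists (m n : ℕ) (hm : 0 < m) (p q : Fin m → ℝ) (hp : ∀ i, 0 < p i)
    (hpsum : ∑ i, p i = 1) (hq : ∀ i, 0 < q i) {α : ℝ} (hα : 0 < α ∧ α < 1)
    {W : Fin m → ℝ} (hW : W ∈ closedSimplex q) :
    ∃ Γ : Set (Fin m → ℝ), ∃ k : Fin m → ℕ,
      IsChamber m n Γ ∧ (chamberFace q Γ).Nonempty ∧ IsQuantileVec p q n α Γ k ∧
      W ∈ closure (chamberFace q Γ) ∧ upperQuantile p n α W ≤ mono W k := by
  obtain ⟨Γ, Φ, hch, hev, hlim⟩ := exists_chamber_approx m n hm q hq hW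
  obtain ⟨ε₀', hW0⟩ := hev.exists
  obtain ⟨k, hqv⟩ := exists_isQuantileVec hm p q hp hpsum hα hch hW0
  have hclos : W ∈ closure (chamberFace q Γ) := mem_closure_of_tendsto hlim hev
  refine ⟨Γ, k, hch, ⟨Φ ε₀', hW0⟩, hqv, hclos, ?_⟩
  apply csSup_le ⟨0, zero_mem_qset hp hpsum hα.2 hW.1⟩
  rintro t ⟨ht0, htα⟩
  by_contra hgt
  push_neg at hgt
  have hevs : ∀ᶠ ε in 𝓝[>] (0:ℝ), ∀ l ∈ countFinset m n,
      mono W k < mono W l → mono (Φ ε) k < mono (Φ ε) l := by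
    rw [eventually_all_finset]
    intro l hl
    by_cases hc : mono W k < mono W l
    · have htend : Tendsto (fun ε => mono (Φ ε) l - mono (Φ ε) k) (𝓝[>] (0:ℝ))
          (𝓝 (mono W l - mono W k)) := by
        have h1 : Tendsto (fun ε => mono (Φ ε) l) (𝓝[>] (0:ℝ)) (𝓝 (mono W l)) :=
          ((continuous_mono l).tendsto W).comp hlim
        have h2 : Tendsto (fun ε => mono (Φ ε) k) (𝓝[>] (0:ℝ)) (𝓝 (mono W k)) :=
          ((continuous_mono k).tendsto W).comp hlim
        exact h1.sub h2
      have hevp := htend.eventually (eventually_gt_nhds (sub_pos.2 hc))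
      filter_upwards [hevp] with ε hε _
      linarith [hε]
    · exact Eventually.of_forall fun ε h => absurd h hc
  obtain ⟨ε₁, hε₁s, hε₁f⟩ := (hevs.and hev).exists
  have hstrict := (hqv.2 (Φ ε₁) hε₁f).2
  have hle : (∑ l ∈ countFinset m n, if t ≤ mono W l then countProb p l else 0)
      ≤ ∑ l ∈ countFinset m n,
          if mono (Φ ε₁) k < mono (Φ ε₁) l then countProb p l else 0 := by
    refine Finset.sum_le_sum fun l hl => ?_
    by_cases hcond : t ≤ mono W l
    · rw [if_pos hcond, if_pos (hε₁s l hl (lt_of_lt_of_le hgt hcond))]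
    · rw [if_neg hcond]
      split_ifs
      · exact countProb_nonneg hp l
      · exact le_refl _
  linarith

end Main

/-- **Finite chamber decomposition of the quantile problem.** The supremum of the upper
`α`-quantile over the closed simplex equals the maximum, over admissible chambers `Γ`
with quantile count vector `k = k_{α,Γ}`, of the supremum of the monomial `W^k` over
the closure of `F_Γ`. -/
theorem chamber_decomposition (m n : ℕ) (hm : 2 ≤ m) (hn : 1 ≤ n)
    (p q : Fin m → ℝ) (hp : ∀ i, 0 < p i ∧ p i < 1) (hpsum : ∑ i, p i = 1)
    (hq : ∀ i, 0 < q i) (α : ℝ) (hα : 0 < α ∧ α < 1) :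
    sSup (upperQuantile p n α '' closedSimplex q) =
      sSup {v : ℝ | ∃ Γ : Set (Fin m → ℝ), ∃ k : Fin m → ℕ,
        IsChamber m n Γ ∧ (chamberFace q Γ).Nonempty ∧ IsQuantileVec p q n α Γ k ∧
        v = sSup ((fun W => mono W k) '' closure (chamberFace q Γ))} := by
  classical
  have hm0 : 0 < m := lt_of_lt_of_le two_pos hm
  have hp' : ∀ i, 0 < p i := fun i => (hp i).1
  set B := (1 + ∑ j, (q j)⁻¹) ^ n with hB
  set RHSset := {v : ℝ | ∃ Γ : Set (Fin m → ℝ), ∃ k : Fin m → ℕ,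
      IsChamber m n Γ ∧ (chamberFace q Γ).Nonempty ∧ IsQuantileVec p q n α Γ k ∧
      v = sSup ((fun W => mono W k) '' closure (chamberFace q Γ))} with hRHS
  -- the closed simplex is nonempty
  have hCSne : (closedSimplex q).Nonempty := by
    set i0 : Fin m := ⟨0, hm0⟩
    refine ⟨fun i => if i = i0 then (q i0)⁻¹ else 0, fun i => ?_, ?_⟩
    · by_cases h : i = i0 <;> simp [h, inv_nonneg.2 (hq i0).le]
    · have h1 : ∀ i : Fin m, q i * (if i = i0 then (q i0)⁻¹ else 0)
          = if i = i0 then 1 else 0 := by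
        intro i
        by_cases h : i = i0 <;> simp [h, mul_inv_cancel₀ (hq i0).ne']
      rw [Finset.sum_congr rfl fun i _ => h1 i]
      simp
  -- face ⊆ closed simplex
  have hfacesub : ∀ Γ : Set (Fin m → ℝ), chamberFace q Γ ⊆ closedSimplex q := by
    intro Γ W hW
    exact ⟨fun i => (hW.1.1 i).le, hW.1.2⟩
  have hclosub : ∀ Γ : Set (Fin m → ℝ), closure (chamberFace q Γ) ⊆ closedSimplex q :=
    fun Γ => closure_minimal (hfacesub Γ) (isClosed_closedSimplex q)
  -- LHS is bounded above by B
  have hLHSbdd : BddAbove (upperQuantile p n α '' closedSimplex q) := by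
    refine ⟨B, ?_⟩
    rintro x ⟨W, hW, rfl⟩
    exact csSup_le ⟨0, zero_mem_qset hp' hpsum hα.2 hW.1⟩ (qset_le_bound hq hα.1 hW)
  have hLHSne : (upperQuantile p n α '' closedSimplex q).Nonempty := hCSne.image _
  -- RHS is bounded above by B
  have hRHSbdd : BddAbove RHSset := by
    refine ⟨B, ?_⟩
    rintro v ⟨Γ, k, hch, hne, hqv, rfl⟩
    refine csSup_le ((hne.mono subset_closure).image _) ?_
    rintro x ⟨W', hW', rfl⟩
    exact mono_le_bound hq (hclosub Γ hW') hqv.1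
  apply le_antisymm
  · -- LHS ≤ RHS
    apply csSup_le hLHSne
    rintro x ⟨W, hWmem, rfl⟩
    obtain ⟨Γ, k, hch, hne, hqv, hclos, hle⟩ :=
      main_exists m n hm0 p q hp' hpsum hq hα hWmem
    have himgbdd : BddAbove ((fun W' => mono W' k) '' closure (chamberFace q Γ)) := by
      refine ⟨B, ?_⟩
      rintro y ⟨W', hW', rfl⟩
      exact mono_le_bound hq (hclosub Γ hW') hqv.1
    have h1 : mono W k ≤ sSup ((fun W' => mono W' k) '' closure (chamberFace q Γ)) :=
      le_csSup himgbdd ⟨W, hclos, rfl⟩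
    have h2 : sSup ((fun W' => mono W' k) '' closure (chamberFace q Γ)) ∈ RHSset :=
      ⟨Γ, k, hch, hne, hqv, rfl⟩
    have h3 := le_csSup hRHSbdd h2
    linarith
  · -- RHS ≤ LHS
    have hRHSne : RHSset.Nonempty := by
      obtain ⟨W, hW⟩ := hCSne
      obtain ⟨Γ, k, hch, hne, hqv, _, _⟩ := main_exists m n hm0 p q hp' hpsum hq hα hW
      exact ⟨_, Γ, k, hch, hne, hqv, rfl⟩
    apply csSup_le hRHSne
    rintro v ⟨Γ, k, hch, hne, hqv, rfl⟩
    set M := sSup (upperQuantile p n α '' closedSimplex q) with hM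
    have hfaceM : ∀ W'' ∈ chamberFace q Γ, mono W'' k ≤ M := by
      intro W'' hW''
      have hW''cs : W'' ∈ closedSimplex q := hfacesub Γ hW''
      have h1 : mono W'' k ≤ upperQuantile p n α W'' := by
        apply le_csSup ⟨B, fun t ht => qset_le_bound hq hα.1 hW''cs t ht⟩
        exact ⟨mono_nonneg (fun i => (hW''.1.1 i).le) k, (hqv.2 W'' hW'').1⟩
      have h2 : upperQuantile p n α W'' ≤ M := le_csSup hLHSbdd ⟨W'', hW''cs, rfl⟩
      linarith
    have hclosM : closure (chamberFace q Γ) ⊆ {W'' : Fin m → ℝ | mono W'' k ≤ M} :=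
      closure_minimal hfaceM (isClosed_le (continuous_mono k) continuous_const)
    apply csSup_le ((hne.mono subset_closure).image _)
    rintro x ⟨W', hW', rfl⟩
    exact hclosM hW'

end
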